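/- arXiv:2604.12405 — 4 statements merged into one kernel-verified Lean document; each statement's English description precedes it below -/
import Mathlib

section
/- Let V = (wE + (1−w)E')/G where E, E' are independent standard exponentials, G is an independent gamma random variable with shape 1/ξ (for ξ > 0) and unit rate, and w ∈ (0,1), w ≠ 1/2. Then for all x ≥ 0, P(V > x) = [w(1 + x/w)^{−1/ξ} − (1−w)(1 + x/(1−w))^{−1/ξ}]/(2w − 1). -/
open MeasureTheory ProbabilityTheory Real
open Set
open scoped ENNReal

lemma exp_surv (s : ℝ) : expMeasure 1 (Ioi s) = ENNReal.ofReal (rexp (-(max s 0))) := by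
  have hprob : IsProbabilityMeasure (expMeasure 1) := isProbabilityMeasure_expMeasure one_pos
  have hIic : expMeasure 1 (Iic s)
      = ENNReal.ofReal (if 0 ≤ s then 1 - rexp (-(1 * s)) else 0) := by
    rw [expMeasure, gammaMeasure, withDensity_apply _ measurableSet_Iic]
    exact lintegral_exponentialPDF_eq_antiDeriv one_pos s
  have h := measure_compl (μ := expMeasure 1) (measurableSet_Iic (a := s)) (measure_ne_top _ _)
  rw [compl_Iic] at h
  rw [h, measure_univ, hIic]
  rcases le_or_gt 0 s with hs | hs
  · have h1 : rexp (-(1 * s)) ≤ 1 := by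
      rw [exp_le_one_iff]; linarith
    rw [if_pos hs, max_eq_left hs, ← ENNReal.ofReal_one,
      ← ENNReal.ofReal_sub _ (by linarith : (0:ℝ) ≤ 1 - rexp (-(1 * s)))]
    norm_num
  · rw [if_neg (not_le.mpr hs), max_eq_right hs.le]
    simp

lemma int_exp_lin {k : ℝ} (C T1 T2 : ℝ) (hk : k ≠ 0) :
    ∫ x in T1..T2, rexp (k * x + C) = (rexp (k * T2 + C) - rexp (k * T1 + C)) / k := by
  have hd : ∀ x : ℝ, HasDerivAt (fun y => rexp (k * y + C) / k) (rexp (k * x + C)) x := by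
    intro x
    have h1 : HasDerivAt (fun y : ℝ => k * y + C) k x := by
      simpa using ((hasDerivAt_id x).const_mul k).add_const C
    have h2 := (h1.exp).div_const k
    simpa [mul_div_cancel_right₀ _ hk] using h2
  rw [intervalIntegral.integral_eq_sub_of_hasDerivAt (fun x _ => hd x)
    ((continuous_exp.comp (by continuity)).intervalIntegrable T1 T2)]
  ring

lemma expsum_surv {a b t : ℝ} (ha : 0 < a) (hb : 0 < b) (hne : a ≠ b) (ht : 0 ≤ t) :
    (expMeasure 1).prod (expMeasure 1) {z : ℝ × ℝ | a * z.1 + b * z.2 > t}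
      = ENNReal.ofReal ((a * rexp (-t / a) - b * rexp (-t / b)) / (a - b)) := by
  have hprob : IsProbabilityMeasure (expMeasure 1) := isProbabilityMeasure_expMeasure one_pos
  have hab : a - b ≠ 0 := sub_ne_zero.mpr hne
  set k : ℝ := (a - b) / b with hk
  have hkne : k ≠ 0 := div_ne_zero hab hb.ne'
  have hS : MeasurableSet {z : ℝ × ℝ | a * z.1 + b * z.2 > t} := by
    apply measurableSet_lt measurable_const
    exact (measurable_fst.const_mul a).add (measurable_snd.const_mul b)
  rw [Measure.prod_apply hS]
  have hsec : ∀ e1 : ℝ, (Prod.mk e1 ⁻¹' {z : ℝ × ℝ | a * z.1 + b * z.2 > t})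
      = Ioi ((t - a * e1) / b) := by
    intro e1
    ext e2
    simp only [mem_preimage, mem_setOf_eq, mem_Ioi, gt_iff_lt, div_lt_iff₀ hb]
    constructor <;> intro h <;> nlinarith
  have hinner : ∀ e1 : ℝ, expMeasure 1 (Prod.mk e1 ⁻¹' {z : ℝ × ℝ | a * z.1 + b * z.2 > t})
      = ENNReal.ofReal (rexp (-(max ((t - a * e1) / b) 0))) := by
    intro e1; rw [hsec e1, exp_surv]
  simp_rw [hinner]
  -- unfold withDensity
  have hfm : Measurable fun e1 : ℝ => ENNReal.ofReal (rexp (-(max ((t - a * e1) / b) 0))) := by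
    apply Measurable.ennreal_ofReal
    exact (((measurable_const.sub (measurable_id.const_mul a)).div_const b).max
      measurable_const).neg.exp
  rw [expMeasure, gammaMeasure,
    lintegral_withDensity_eq_lintegral_mul (μ := (volume : Measure ℝ)) (f := gammaPDF 1 1)
      ((measurable_gammaPDFReal 1 1).ennreal_ofReal) hfm]
  have hsplit0 := lintegral_add_compl (μ := (volume : Measure ℝ))
    (fun e1 => (gammaPDF 1 1 * fun e1 : ℝ =>
      ENNReal.ofReal (rexp (-(max ((t - a * e1) / b) 0)))) e1) (measurableSet_Iic (a := (0:ℝ)))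
  have hIic : ∫⁻ e1 in Iic (0:ℝ), (gammaPDF 1 1 * fun e1 : ℝ =>
      ENNReal.ofReal (rexp (-(max ((t - a * e1) / b) 0)))) e1 = 0 := by
    rw [← setLIntegral_congr (Iio_ae_eq_Iic (a := (0:ℝ)))]
    rw [setLIntegral_congr_fun (g := fun _ => 0) measurableSet_Iio
      (fun y (hy : y < 0) => by simp [gammaPDF_of_neg hy])]
    simp
  rw [← hsplit0, hIic, zero_add, compl_Iic]
  -- split Ioi 0 into Ioc 0 (t/a) and Ioi (t/a)
  have hTnn : 0 ≤ t / a := div_nonneg ht ha.le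
  rw [← Ioc_union_Ioi_eq_Ioi hTnn,
    lintegral_union measurableSet_Ioi (Ioc_disjoint_Ioi le_rfl)]
  have hIoc : ∫⁻ e1 in Ioc (0:ℝ) (t/a), (gammaPDF 1 1 * fun e1 : ℝ =>
      ENNReal.ofReal (rexp (-(max ((t - a * e1) / b) 0)))) e1
      = ENNReal.ofReal (∫ e1 in Ioc (0:ℝ) (t/a), rexp (k * e1 + (-t/b))) := by
    rw [setLIntegral_congr_fun measurableSet_Ioc (fun y hy => ?_),
      ← ofReal_integral_eq_lintegral_ofReal]
    · exact (continuous_exp.comp (by continuity)).integrableOn_Ioc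
    · exact ae_of_all _ fun y => (exp_nonneg _)
    · obtain ⟨hy0, hyT⟩ := hy
      have hmax : max ((t - a * y) / b) 0 = (t - a * y) / b := by
        apply max_eq_left
        apply div_nonneg _ hb.le
        rw [le_div_iff₀ ha] at hyT
        nlinarith
      simp only [Pi.mul_apply, gammaPDF_of_nonneg hy0.le, hmax]
      rw [← ENNReal.ofReal_mul (by positivity)]
      congr 1
      rw [Gamma_one]
      rw [show (1:ℝ) ^ (1:ℝ) / 1 * y ^ ((1:ℝ) - 1) * rexp (-(1 * y)) = rexp (-y) by
        simp [Real.rpow_one]]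
      rw [← Real.exp_add]
      congr 1
      rw [hk]
      field_simp
      ring
  have hIoi : ∫⁻ e1 in Ioi (t/a), (gammaPDF 1 1 * fun e1 : ℝ =>
      ENNReal.ofReal (rexp (-(max ((t - a * e1) / b) 0)))) e1
      = ENNReal.ofReal (rexp (-(t/a))) := by
    rw [setLIntegral_congr_fun measurableSet_Ioi (fun y hy => ?_)]
    · rw [← ofReal_integral_eq_lintegral_ofReal (exp_neg_integrableOn_Ioi _ one_pos)
        (ae_of_all _ fun y => (exp_nonneg _))]
      congr 1
      simpa using integral_exp_neg_Ioi (t/a)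
    · have hy0 : (0:ℝ) < y := lt_of_le_of_lt hTnn hy
      have hmax : max ((t - a * y) / b) 0 = 0 := by
        apply max_eq_right
        apply div_nonpos_of_nonpos_of_nonneg _ hb.le
        have h' := (div_lt_iff₀ ha).mp (mem_Ioi.mp hy)
        nlinarith
      simp only [Pi.mul_apply, gammaPDF_of_nonneg hy0.le, hmax]
      rw [Gamma_one, show (1:ℝ) ^ (1:ℝ) / 1 * y ^ ((1:ℝ) - 1) * rexp (-(1 * y)) = rexp (-y) by
        simp [Real.rpow_one]]
      simp
  rw [hIoc, hIoi]
  rw [← ENNReal.ofReal_add (setIntegral_nonneg measurableSet_Ioc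
      (fun y _ => exp_nonneg _)) (exp_nonneg _)]
  congr 1
  rw [← intervalIntegral.integral_of_le hTnn, int_exp_lin _ _ _ hkne]
  have e1 : k * (t/a) + -t/b = -t/a := by rw [hk]; field_simp; ring
  have e2 : k * 0 + -t/b = -t/b := by ring
  rw [e1, e2, show -(t/a) = -t/a by ring]
  have hu := exp_pos (-t/a)
  have hv := exp_pos (-t/b)
  rw [hk]
  field_simp
  ring

lemma gamma_Ioi_one {a r : ℝ} (ha : 0 < a) (hr : 0 < r) :
    ∫⁻ x in Ioi (0:ℝ), gammaPDF a r x = 1 := by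
  have h0 : ∫⁻ x in Iic (0:ℝ), gammaPDF a r x = 0 := by
    rw [← setLIntegral_congr (Iio_ae_eq_Iic (a := (0:ℝ)))]
    exact lintegral_gammaPDF_of_nonpos le_rfl
  have := lintegral_add_compl (μ := (volume : Measure ℝ)) (gammaPDF a r) (measurableSet_Iic (a := (0:ℝ)))
  rw [compl_Iic, h0, zero_add] at this
  rw [this, lintegral_gammaPDF_eq_one ha hr]

lemma gamma_laplace {r c : ℝ} (hr : 0 < r) (hc : 0 ≤ c) :
    ∫⁻ g in Ioi (0:ℝ), gammaPDF r 1 g * ENNReal.ofReal (rexp (-(c * g)))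
      = ENNReal.ofReal ((1 + c) ^ (-r)) := by
  have h1c : (0:ℝ) < 1 + c := by linarith
  have key : ∀ g ∈ Ioi (0:ℝ), gammaPDF r 1 g * ENNReal.ofReal (rexp (-(c * g)))
      = ENNReal.ofReal ((1 + c) ^ (-r)) * gammaPDF r (1 + c) g := by
    intro g hg
    have hΓ : 0 < Gamma r := Gamma_pos_of_pos hr
    have hg2 : (0:ℝ) < g := hg
    rw [gammaPDF_of_nonneg (le_of_lt hg), gammaPDF_of_nonneg (le_of_lt hg),
      ← ENNReal.ofReal_mul (by positivity), ← ENNReal.ofReal_mul (by positivity)]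
    congr 1
    rw [mul_assoc, ← Real.exp_add]
    rw [show (-(1 * g) + -(c * g)) = -((1 + c) * g) by ring]
    rw [show ((1:ℝ)+c) ^ (-r) * ((1 + c) ^ r / Gamma r * g ^ (r - 1) * rexp (-((1 + c) * g)))
        = ((1+c) ^ (-r) * (1 + c) ^ r) / Gamma r * g ^ (r - 1) * rexp (-((1 + c) * g)) by ring]
    rw [← Real.rpow_add h1c, neg_add_cancel, Real.rpow_zero]
    norm_num
  rw [setLIntegral_congr_fun measurableSet_Ioi key, lintegral_const_mul]
  · rw [gamma_Ioi_one hr h1c, mul_one]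
  · exact (measurable_gammaPDFReal r (1 + c)).ennreal_ofReal

lemma gamma_combo {r x a b : ℝ} (hr : 0 < r) (hx : 0 ≤ x) (hb : 0 < b) (hba : b < a)
    (hab : a + b = 1) :
    ∫⁻ g in Ioi (0:ℝ), gammaPDF r 1 g *
        ENNReal.ofReal ((a * rexp (-(x * g) / a) - b * rexp (-(x * g) / b)) / (a - b))
      = ENNReal.ofReal ((a * (1 + x / a) ^ (-r) - b * (1 + x / b) ^ (-r)) / (a - b)) := by
  have ha : 0 < a := lt_trans hb hba
  have hD : (0:ℝ) < a - b := sub_pos.mpr hba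
  set F : ℝ → ℝ≥0∞ := fun g => gammaPDF r 1 g * ENNReal.ofReal (rexp (-((x / a) * g))) with hF
  set H : ℝ → ℝ≥0∞ := fun g => gammaPDF r 1 g * ENNReal.ofReal (rexp (-((x / b) * g))) with hH
  have hFm : Measurable F := ((measurable_gammaPDFReal r 1).ennreal_ofReal).mul
    ((measurable_id.const_mul _).neg.exp.ennreal_ofReal)
  have hHm : Measurable H := ((measurable_gammaPDFReal r 1).ennreal_ofReal).mul
    ((measurable_id.const_mul _).neg.exp.ennreal_ofReal)
  have hptwise : ∀ g ∈ Ioi (0:ℝ), gammaPDF r 1 g *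
        ENNReal.ofReal ((a * rexp (-(x * g) / a) - b * rexp (-(x * g) / b)) / (a - b))
      = ENNReal.ofReal (a - b)⁻¹ * (ENNReal.ofReal a * F g - ENNReal.ofReal b * H g) := by
    intro g hg
    have hg0 : (0:ℝ) < g := hg
    have hle : b * rexp (-(x * g) / b) ≤ a * rexp (-(x * g) / a) := by
      apply mul_le_mul hba.le _ (exp_nonneg _) ha.le
      apply exp_le_exp.mpr
      rw [neg_div, neg_div, neg_le_neg_iff]
      apply div_le_div_of_nonneg_left (by positivity) hb
      exact hba.le
    rw [div_eq_inv_mul, ENNReal.ofReal_mul (by positivity),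
      ENNReal.ofReal_sub _ (by positivity), hF, hH]
    have e1 : -(x * g) / a = -((x / a) * g) := by ring
    have e2 : -(x * g) / b = -((x / b) * g) := by ring
    rw [e1, e2, ENNReal.ofReal_mul ha.le, ENNReal.ofReal_mul hb.le]
    rw [mul_left_comm]
    congr 1
    simp only
    rw [ENNReal.mul_sub (fun _ _ => (by simp [gammaPDF] : gammaPDF r 1 g ≠ ⊤))]
    congr 1 <;> ring
  rw [setLIntegral_congr_fun measurableSet_Ioi hptwise]
  rw [lintegral_const_mul _ (f := fun g => ENNReal.ofReal a * F g - ENNReal.ofReal b * H g)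
    (((hFm.const_mul _).sub (hHm.const_mul _)))]
  have hFint : ∫⁻ g in Ioi (0:ℝ), ENNReal.ofReal a * F g
      = ENNReal.ofReal a * ENNReal.ofReal ((1 + x / a) ^ (-r)) := by
    rw [lintegral_const_mul _ hFm, hF]
    rw [gamma_laplace hr (by positivity)]
  have hHint : ∫⁻ g in Ioi (0:ℝ), ENNReal.ofReal b * H g
      = ENNReal.ofReal b * ENNReal.ofReal ((1 + x / b) ^ (-r)) := by
    rw [lintegral_const_mul _ hHm, hH]
    rw [gamma_laplace hr (by positivity)]
  have hmono : (fun g => ENNReal.ofReal b * H g)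
      ≤ᵐ[volume.restrict (Ioi (0:ℝ))] fun g => ENNReal.ofReal a * F g := by
    refine (ae_restrict_iff' measurableSet_Ioi).mpr (ae_of_all _ fun g hg => ?_)
    have hg0 : (0:ℝ) < g := hg
    rw [hF, hH]
    simp only
    rw [← mul_assoc, ← mul_assoc, mul_comm (ENNReal.ofReal b), mul_comm (ENNReal.ofReal a),
      mul_assoc, mul_assoc]
    apply mul_le_mul_right _ _
    rw [← ENNReal.ofReal_mul hb.le, ← ENNReal.ofReal_mul ha.le]
    apply ENNReal.ofReal_le_ofReal
    apply mul_le_mul hba.le _ (exp_nonneg _) ha.le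
    apply exp_le_exp.mpr
    rw [neg_le_neg_iff]
    apply mul_le_mul_of_nonneg_right _ hg0.le
    apply div_le_div_of_nonneg_left hx hb hba.le
  have hHfin : ∫⁻ g in Ioi (0:ℝ), ENNReal.ofReal b * H g ≠ ⊤ := by
    rw [hHint]
    exact ENNReal.mul_ne_top ENNReal.ofReal_ne_top ENNReal.ofReal_ne_top
  rw [lintegral_sub (hHm.const_mul _) hHfin hmono, hFint, hHint]
  rw [← ENNReal.ofReal_mul ha.le, ← ENNReal.ofReal_mul hb.le,
    ← ENNReal.ofReal_sub _ (by positivity), ← ENNReal.ofReal_mul (by positivity)]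
  rw [← div_eq_inv_mul]

-- combination of measure computation, parametrized by a > b
lemma main_ab {Ω : Type*} [MeasurableSpace Ω] (μ : Measure Ω) [IsProbabilityMeasure μ]
    (E E' G : Ω → ℝ) (hEm : Measurable E) (hE'm : Measurable E') (hGm : Measurable G)
    (r : ℝ) (hr : 0 < r) (a b : ℝ) (hb : 0 < b) (hba : b < a) (hab : a + b = 1)
    (hE : μ.map E = expMeasure 1) (hE' : μ.map E' = expMeasure 1)
    (hG : μ.map G = gammaMeasure r 1)
    (hEE' : IndepFun E E' μ) (hpairG : IndepFun (fun ω => (E ω, E' ω)) G μ)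
    (x : ℝ) (hx : 0 ≤ x) :
    μ {ω | (a * E ω + b * E' ω) / G ω > x}
      = ENNReal.ofReal ((a * (1 + x / a) ^ (-r) - b * (1 + x / b) ^ (-r)) / (a - b)) := by
  have ha : 0 < a := lt_trans hb hba
  have hprobE : IsProbabilityMeasure (expMeasure 1) := isProbabilityMeasure_expMeasure one_pos
  have hprobP : IsProbabilityMeasure ((expMeasure 1).prod (expMeasure 1)) := by infer_instance
  have hmapEE' : μ.map (fun ω => (E ω, E' ω)) = (expMeasure 1).prod (expMeasure 1) := by
    exact ((indepFun_iff_map_prod_eq_prod_map_map hEm.aemeasurable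
      hE'm.aemeasurable).mp hEE').trans (by rw [hE, hE'])
  have hmapJ : μ.map (fun ω => (G ω, (E ω, E' ω)))
      = (gammaMeasure r 1).prod ((expMeasure 1).prod (expMeasure 1)) := by
    exact ((indepFun_iff_map_prod_eq_prod_map_map hGm.aemeasurable
      (hEm.prodMk hE'm).aemeasurable).mp hpairG.symm).trans (by rw [hG, hmapEE'])
  set A : Set (ℝ × ℝ × ℝ) := {z : ℝ × ℝ × ℝ | (a * z.2.1 + b * z.2.2) / z.1 > x} with hAdef
  have hA : MeasurableSet A := by
    apply measurableSet_lt measurable_const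
    exact (((measurable_fst.comp measurable_snd).const_mul a).add
      ((measurable_snd.comp measurable_snd).const_mul b)).div measurable_fst
  have hpre : {ω | (a * E ω + b * E' ω) / G ω > x}
      = (fun ω => (G ω, (E ω, E' ω))) ⁻¹' A := rfl
  rw [hpre, ← Measure.map_apply (hGm.prodMk (hEm.prodMk hE'm)) hA, hmapJ,
    Measure.prod_apply hA]
  -- the sectioned measure function
  have hFmeas : Measurable fun g : ℝ =>
      (expMeasure 1).prod (expMeasure 1) (Prod.mk g ⁻¹' A) :=
    measurable_measure_prodMk_left hA
  have hγIic : ∫⁻ g in Iic (0:ℝ),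
      (expMeasure 1).prod (expMeasure 1) (Prod.mk g ⁻¹' A) ∂(gammaMeasure r 1) = 0 := by
    apply le_antisymm _ zero_le
    calc ∫⁻ g in Iic (0:ℝ), (expMeasure 1).prod (expMeasure 1) (Prod.mk g ⁻¹' A)
          ∂(gammaMeasure r 1)
        ≤ ∫⁻ _ in Iic (0:ℝ), 1 ∂(gammaMeasure r 1) :=
          lintegral_mono fun g => prob_le_one
      _ = gammaMeasure r 1 (Iic 0) := by simp
      _ = 0 := by
          rw [gammaMeasure, withDensity_apply _ measurableSet_Iic,
            ← setLIntegral_congr (Iio_ae_eq_Iic (a := (0:ℝ))),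
            lintegral_gammaPDF_of_nonpos le_rfl]
  have hsplit := lintegral_add_compl (μ := gammaMeasure r 1)
    (fun g : ℝ => (expMeasure 1).prod (expMeasure 1) (Prod.mk g ⁻¹' A))
    (measurableSet_Iic (a := (0:ℝ)))
  rw [← hsplit, hγIic, zero_add, compl_Iic]
  -- pointwise evaluation on Ioi 0
  have hsec : ∀ g ∈ Ioi (0:ℝ), (expMeasure 1).prod (expMeasure 1) (Prod.mk g ⁻¹' A)
      = ENNReal.ofReal ((a * rexp (-(x * g) / a) - b * rexp (-(x * g) / b)) / (a - b)) := by
    intro g hg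
    have hg0 : (0:ℝ) < g := hg
    have hsection : Prod.mk g ⁻¹' A = {z : ℝ × ℝ | a * z.1 + b * z.2 > x * g} := by
      ext z
      simp only [hAdef, mem_preimage, mem_setOf_eq, gt_iff_lt]
      rw [lt_div_iff₀ hg0]
    rw [hsection, expsum_surv ha hb (by intro h; rw [h] at hba; exact lt_irrefl b hba)
      (mul_nonneg hx hg0.le)]
  rw [setLIntegral_congr_fun measurableSet_Ioi hsec]
  -- withDensity
  have hintm : Measurable fun g : ℝ =>
      ENNReal.ofReal ((a * rexp (-(x * g) / a) - b * rexp (-(x * g) / b)) / (a - b)) := by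
    apply Measurable.ennreal_ofReal
    apply Measurable.div_const
    exact ((((measurable_id.const_mul x).neg.div_const a).exp.const_mul a).sub
      (((measurable_id.const_mul x).neg.div_const b).exp.const_mul b))
  rw [gammaMeasure, setLIntegral_withDensity_eq_setLIntegral_mul (μ := (volume : Measure ℝ))
    (f := gammaPDF r 1) ((measurable_gammaPDFReal r 1).ennreal_ofReal) hintm measurableSet_Ioi]
  have := gamma_combo (x := x) hr hx hb hba hab
  rw [← this]
  apply setLIntegral_congr_fun measurableSet_Ioi
  intro g hg
  simp only [Pi.mul_apply]

lemma nonneg_combo {a b x r : ℝ} (hb : 0 < b) (hba : b < a) (hx : 0 ≤ x) (hr : 0 < r) :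
    0 ≤ (a * (1 + x / a) ^ (-r) - b * (1 + x / b) ^ (-r)) / (a - b) := by
  have ha : 0 < a := lt_trans hb hba
  apply div_nonneg _ (by linarith)
  rw [sub_nonneg]
  apply mul_le_mul hba.le _ (by positivity) ha.le
  apply Real.rpow_le_rpow_of_nonpos (by positivity) _ (by linarith)
  have : x / a ≤ x / b := div_le_div_of_nonneg_left hx hb hba.le
  linarith



/-- Survival function of `V = (wE + (1-w)E')/G` where `E, E'` are iid standard exponential,
`G ~ Gamma(1/ξ, 1)` independent, `w ∈ (0,1) \ {1/2}`:
`P(V > x) = [w(1+x/w)^{-1/ξ} - (1-w)(1+x/(1-w))^{-1/ξ}]/(2w-1)` for `x ≥ 0`. -/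
theorem surv_V_general_w
    {Ω : Type*} [MeasurableSpace Ω] (μ : Measure Ω) [IsProbabilityMeasure μ]
    (E E' G : Ω → ℝ) (hEm : Measurable E) (hE'm : Measurable E') (hGm : Measurable G)
    (ξ : ℝ) (hξ : 0 < ξ) (w : ℝ) (hw : w ∈ Set.Ioo (0 : ℝ) 1) (hw2 : w ≠ 1 / 2)
    (hE : μ.map E = expMeasure 1) (hE' : μ.map E' = expMeasure 1)
    (hG : μ.map G = gammaMeasure (1 / ξ) 1)
    (hind : iIndepFun ![E, E', G] μ) :
    ∀ x : ℝ, 0 ≤ x →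
      (μ {ω | (w * E ω + (1 - w) * E' ω) / G ω > x}).toReal
        = (w * (1 + x / w) ^ (-1 / ξ) - (1 - w) * (1 + x / (1 - w)) ^ (-1 / ξ))
            / (2 * w - 1) := by
  intro x hx
  obtain ⟨hw0, hw1⟩ := hw
  have hr : 0 < 1 / ξ := by positivity
  have hexp : -1 / ξ = -(1 / ξ) := by ring
  have hm : ∀ i, Measurable (![E, E', G] i) := by
    intro i; fin_cases i <;> simpa
  have hEE' : IndepFun E E' μ := by
    simpa using hind.indepFun (show (0 : Fin 3) ≠ 1 by decide)
  have hpairG : IndepFun (fun ω => (E ω, E' ω)) G μ := by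
    simpa using hind.indepFun_prodMk hm 0 1 2 (by decide) (by decide)
  rcases lt_or_gt_of_ne hw2 with hcase | hcase
  · -- w < 1/2 : use a = 1 - w, b = w with E' and E swapped
    have hEE'2 : IndepFun E' E μ := hEE'.symm
    have hpairG2 : IndepFun (fun ω => (E' ω, E ω)) G μ := by
      simpa using hind.indepFun_prodMk hm 1 0 2 (by decide) (by decide)
    have hevent : {ω | (w * E ω + (1 - w) * E' ω) / G ω > x}
        = {ω | ((1 - w) * E' ω + w * E ω) / G ω > x} := by
      ext ω; simp [add_comm]
    rw [hevent, main_ab μ E' E G hE'm hEm hGm (1 / ξ) hr (1 - w) w hw0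
      (by linarith) (by ring) hE' hE hG hEE'2 hpairG2 x hx,
      ENNReal.toReal_ofReal (nonneg_combo hw0 (by linarith) hx hr)]
    rw [hexp]
    rw [show ((1:ℝ) - w) - w = -(2 * w - 1) by ring, div_neg, ← neg_div, neg_sub]
  · -- w > 1/2
    rw [main_ab μ E E' G hEm hE'm hGm (1 / ξ) hr w (1 - w) (by linarith)
      (by linarith) (by ring) hE hE' hG hEE' hpairG x hx,
      ENNReal.toReal_ofReal (nonneg_combo (by linarith) (by linarith) hx hr)]
    rw [hexp]
    rw [show w - (1 - w) = 2 * w - 1 by ring]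
end

section
/- Let V = (wE + (1−w)E')/G with the setup as before and shape parameter 1/ξ, w = 1/2. Then for all x ≥ 0, P(V > x) = (1 + 2x)^{−1/ξ − 1} (1 + 2x(1 + 1/ξ)). -/
open MeasureTheory ProbabilityTheory Real

section Aux
open Set
open scoped ENNReal

private instance : IsProbabilityMeasure (expMeasure 1) :=
  isProbabilityMeasure_expMeasure zero_lt_one

private lemma exp_surv' {t : ℝ} (ht : 0 ≤ t) :
    expMeasure 1 (Ioi t) = ENNReal.ofReal (exp (-t)) := by
  rw [expMeasure, gammaMeasure, withDensity_apply _ measurableSet_Ioi]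
  have h1 : ∀ y ∈ Ioi t, gammaPDF 1 1 y = ENNReal.ofReal (exp (-y)) := by
    intro y hy
    rw [gammaPDF_of_nonneg (ht.trans (le_of_lt hy))]
    norm_num
  rw [setLIntegral_congr_fun_ae measurableSet_Ioi (ae_of_all _ h1)]
  rw [← ofReal_integral_eq_lintegral_ofReal]
  · rw [integral_exp_neg_Ioi]
  · exact (exp_neg_integrableOn_Ioi t zero_lt_one).congr_fun (fun y _ => by ring_nf)
      measurableSet_Ioi
  · exact ae_of_all _ fun y => (exp_pos _).le

private lemma exp_Iio_zero' : expMeasure 1 (Iio 0) = 0 := by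
  rw [expMeasure, gammaMeasure, withDensity_apply _ measurableSet_Iio]
  exact lintegral_gammaPDF_of_nonpos le_rfl

private lemma exp_surv_nonpos' {t : ℝ} (ht : t ≤ 0) : expMeasure 1 (Ioi t) = 1 := by
  refine le_antisymm prob_le_one ?_
  calc (1 : ℝ≥0∞) = expMeasure 1 (Ioi 0) := by rw [exp_surv' le_rfl]; simp
    _ ≤ expMeasure 1 (Ioi t) := measure_mono (Ioi_subset_Ioi ht)

/-- survival of the sum of two iid exponentials -/
private lemma exp2_surv' {t : ℝ} (ht : 0 ≤ t) :
    ((expMeasure 1).prod (expMeasure 1)) {p : ℝ × ℝ | t < p.1 + p.2}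
      = ENNReal.ofReal (exp (-t) * (1 + t)) := by
  have hS : MeasurableSet {p : ℝ × ℝ | t < p.1 + p.2} :=
    measurableSet_lt measurable_const (measurable_fst.add measurable_snd)
  rw [Measure.prod_apply hS]
  have hpre : ∀ a : ℝ, (Prod.mk a ⁻¹' {p : ℝ × ℝ | t < p.1 + p.2}) = Ioi (t - a) := by
    intro a; ext b; simp [mem_Ioi]; constructor <;> intro h <;> linarith
  have key : ∀ a : ℝ, expMeasure 1 (Prod.mk a ⁻¹' {p : ℝ × ℝ | t < p.1 + p.2})
      = (if a ≤ t then ENNReal.ofReal (exp (-(t - a))) else 1) := by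
    intro a
    rw [hpre a]
    split_ifs with h
    · exact exp_surv' (by linarith)
    · exact exp_surv_nonpos' (by linarith)
  simp_rw [key]
  set g : ℝ → ℝ≥0∞ := fun a => if a ≤ t then ENNReal.ofReal (exp (-(t - a))) else 1 with hg_def
  have hgm : Measurable g := by
    apply Measurable.ite measurableSet_Iic
    · exact (measurable_id.const_sub t).neg.exp.ennreal_ofReal
    · exact measurable_const
  have hpdfm : Measurable (gammaPDF 1 1) := (measurable_gammaPDFReal 1 1).ennreal_ofReal
  rw [expMeasure, gammaMeasure, lintegral_withDensity_eq_lintegral_mul _ hpdfm hgm]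
  have hsplit : (univ : Set ℝ) = Iio 0 ∪ (Ico 0 t ∪ Ici t) := by
    rw [Ico_union_Ici_eq_Ici ht, Iio_union_Ici]
  rw [← setLIntegral_univ, hsplit, lintegral_union (measurableSet_Ico.union measurableSet_Ici)
      (by rw [Set.disjoint_union_right]; constructor
          · exact Set.disjoint_left.2 fun a (ha : a < 0) hb => absurd hb.1 (not_le.2 ha)
          · exact Set.disjoint_left.2 fun a (ha : a < 0) hb => absurd (ht.trans hb) (not_le.2 ha)),
    lintegral_union measurableSet_Ici (Set.disjoint_left.2 fun a ha hb => ha.2.not_ge hb)]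
  simp only [Pi.mul_apply]
  have h1 : ∫⁻ a in Iio 0, gammaPDF 1 1 a * g a = 0 := by
    rw [setLIntegral_congr_fun_ae measurableSet_Iio
      (ae_of_all _ (fun a (ha : a < 0) => by rw [gammaPDF_of_neg ha, zero_mul]))]
    simp
  have h2 : ∫⁻ a in Ico 0 t, gammaPDF 1 1 a * g a = ENNReal.ofReal (t * exp (-t)) := by
    rw [setLIntegral_congr_fun_ae measurableSet_Ico (ae_of_all _
      (fun a (ha : a ∈ Ico 0 t) => show gammaPDF 1 1 a * g a = ENNReal.ofReal (exp (-t)) from by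
        rw [hg_def]
        simp only [if_pos ha.2.le]
        rw [gammaPDF, ← ENNReal.ofReal_mul (gammaPDFReal_nonneg zero_lt_one zero_lt_one a)]
        congr 1
        simp only [gammaPDFReal, if_pos ha.1, Real.Gamma_one, sub_self, rpow_zero, one_rpow,
          div_one, mul_one, one_mul]
        rw [← exp_add]
        congr 1
        ring))]
    rw [lintegral_const, Measure.restrict_apply_univ, Real.volume_Ico,
      ← ENNReal.ofReal_mul (exp_pos _).le]
    rw [sub_zero, mul_comm]
  have h3 : ∫⁻ a in Ici t, gammaPDF 1 1 a * g a = ENNReal.ofReal (exp (-t)) := by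
    have : ∀ a ∈ Ioi t, gammaPDF 1 1 a * g a = ENNReal.ofReal (exp (-a)) := by
      intro a (ha : t < a)
      rw [hg_def]
      simp only [if_neg (not_le.2 ha), mul_one]
      rw [gammaPDF, gammaPDFReal, if_pos (ht.trans ha.le)]
      simp [Real.Gamma_one]
    rw [setLIntegral_congr Ioi_ae_eq_Ici.symm,
      setLIntegral_congr_fun_ae measurableSet_Ioi (ae_of_all _ this),
      ← ofReal_integral_eq_lintegral_ofReal
        ((exp_neg_integrableOn_Ioi t zero_lt_one).congr_fun (fun y _ => by ring_nf)
          measurableSet_Ioi)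
        (ae_of_all _ fun y => (exp_pos _).le),
      integral_exp_neg_Ioi]
  rw [h1, h2, h3, zero_add, ← ENNReal.ofReal_add (by positivity) (exp_pos _).le]
  congr 1
  ring

private lemma exp2_neg' :
    ((expMeasure 1).prod (expMeasure 1)) {p : ℝ × ℝ | p.1 + p.2 < 0} = 0 := by
  have hsub : {p : ℝ × ℝ | p.1 + p.2 < 0} ⊆ (Iio 0 ×ˢ univ) ∪ (univ ×ˢ Iio 0) := by
    intro p hp
    rcases lt_or_ge p.1 0 with h | h
    · exact Or.inl ⟨h, trivial⟩
    · exact Or.inr ⟨trivial, by simpa using lt_of_add_lt_of_nonneg_right hp h⟩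
  refine measure_mono_null hsub (measure_union_null ?_ ?_)
  · rw [Measure.prod_prod, exp_Iio_zero', zero_mul]
  · rw [Measure.prod_prod, exp_Iio_zero', mul_zero]

private lemma gamma_int' {a x : ℝ} (ha : 0 < a) (hx : 0 ≤ x) :
    (∫⁻ g, (if 0 < g then ENNReal.ofReal (exp (-(2*x*g)) * (1 + 2*x*g)) else 0)
        ∂(gammaMeasure a 1))
      = ENNReal.ofReal ((1 + 2*x) ^ (-a - 1) * (1 + 2*x*(1 + a))) := by
  set c : ℝ := 1 + 2*x with hc_def
  have hc : 0 < c := by positivity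
  have hfm : Measurable fun g : ℝ =>
      (if 0 < g then ENNReal.ofReal (exp (-(2*x*g)) * (1 + 2*x*g)) else 0) := by
    refine Measurable.ite measurableSet_Ioi ?_ measurable_const
    exact (((measurable_const.mul measurable_id).neg.exp).mul
      (measurable_const.add (measurable_const.mul measurable_id))).ennreal_ofReal
  have hpdfm : Measurable (gammaPDF a 1) := (measurable_gammaPDFReal a 1).ennreal_ofReal
  rw [gammaMeasure, lintegral_withDensity_eq_lintegral_mul _ hpdfm hfm]
  simp only [Pi.mul_apply]
  have hsplit : (univ : Set ℝ) = Iic 0 ∪ Ioi 0 := (Iic_union_Ioi).symm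
  rw [← setLIntegral_univ, hsplit, lintegral_union measurableSet_Ioi (Iic_disjoint_Ioi le_rfl)]
  have h0 : ∫⁻ g in Iic 0, gammaPDF a 1 g *
      (if 0 < g then ENNReal.ofReal (exp (-(2*x*g)) * (1 + 2*x*g)) else 0) = 0 := by
    rw [setLIntegral_congr_fun_ae measurableSet_Iic (ae_of_all _
      (fun g (hg : g ≤ 0) => by rw [if_neg (not_lt.2 hg), mul_zero]))]
    simp
  rw [h0, zero_add]
  set F : ℝ → ℝ := fun g =>
    (1 ^ a / Gamma a * g ^ (a-1) * exp (-(1*g))) * (exp (-(2*x*g)) * (1 + 2*x*g)) with hF_def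
  have hcong : ∀ g ∈ Ioi (0:ℝ), gammaPDF a 1 g *
      (if 0 < g then ENNReal.ofReal (exp (-(2*x*g)) * (1 + 2*x*g)) else 0)
      = ENNReal.ofReal (F g) := by
    intro g (hg : 0 < g)
    rw [if_pos hg, gammaPDF_of_nonneg hg.le, ← ENNReal.ofReal_mul (by positivity)]
  rw [setLIntegral_congr_fun_ae measurableSet_Ioi (ae_of_all _ hcong)]
  have hint1 : IntegrableOn (fun g : ℝ => g ^ (a-1) * exp (-(c*g))) (Ioi 0) := by
    have := integrableOn_rpow_mul_exp_neg_mul_rpow (s := a-1) (p := 1) (b := c)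
      (by linarith) zero_lt_one hc
    exact this.congr_fun (fun g hg => by beta_reduce; rw [Real.rpow_one]; ring_nf) measurableSet_Ioi
  have hint2 : IntegrableOn (fun g : ℝ => g ^ a * exp (-(c*g))) (Ioi 0) := by
    have := integrableOn_rpow_mul_exp_neg_mul_rpow (s := a) (p := 1) (b := c)
      (by linarith) zero_lt_one hc
    exact this.congr_fun (fun g hg => by beta_reduce; rw [Real.rpow_one]; ring_nf) measurableSet_Ioi
  have hFeq : ∀ g ∈ Ioi (0:ℝ), F g
      = (1 / Gamma a) * (g ^ (a-1) * exp (-(c*g)))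
        + (2*x / Gamma a) * (g ^ a * exp (-(c*g))) := by
    intro g (hg : 0 < g)
    rw [hF_def]
    have h1 : g ^ a = g ^ (a-1) * g := by
      rw [← Real.rpow_add_one (ne_of_gt hg) (a-1)]; ring_nf
    simp only [one_rpow, one_mul]
    have h2 : exp (-(c*g)) = exp (-g) * exp (-(2*x*g)) := by
      rw [← exp_add]; congr 1; rw [hc_def]; ring
    rw [h1, h2]
    field_simp
  have hFint : IntegrableOn F (Ioi 0) := by
    refine IntegrableOn.congr_fun ?_ (fun g hg => (hFeq g hg).symm) measurableSet_Ioi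
    exact (hint1.const_mul (1 / Gamma a)).add (hint2.const_mul (2*x / Gamma a))
  have hI2 : ∫ t in Ioi (0:ℝ), t ^ a * exp (-(c*t)) = (1/c) ^ (a+1) * Gamma (a+1) := by
    have h := integral_rpow_mul_exp_neg_mul_Ioi (a := a+1) (by linarith) hc
    simpa using h
  rw [← ofReal_integral_eq_lintegral_ofReal hFint]
  · congr 1
    rw [setIntegral_congr_fun measurableSet_Ioi hFeq, integral_add
        (hint1.const_mul _) (hint2.const_mul _), integral_const_mul, integral_const_mul,
      integral_rpow_mul_exp_neg_mul_Ioi ha hc, hI2]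
    rw [Real.Gamma_add_one (ne_of_gt ha)]
    have hG : Gamma a ≠ 0 := ne_of_gt (Gamma_pos_of_pos ha)
    have e1 : (1/c) ^ a = c ^ (-a) := by
      rw [one_div, Real.inv_rpow hc.le, ← Real.rpow_neg hc.le]
    have e2 : (1/c) ^ (a+1) = c ^ (-a-1) := by
      rw [one_div, Real.inv_rpow hc.le, ← Real.rpow_neg hc.le]
      congr 1; ring
    have e3 : c ^ (-a) = c ^ (-a-1) * c := by
      rw [← Real.rpow_add_one (ne_of_gt hc) (-a-1)]
      congr 1; ring
    rw [e1, e2, e3, hc_def]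
    field_simp
    ring
  · filter_upwards [self_mem_ae_restrict measurableSet_Ioi] with g hg
    have hg' : (0:ℝ) < g := hg
    rw [hF_def]
    positivity

end Aux

/-- Survival function of `V = ((E + E')/2)/G` (the case `w = 1/2`), with `E, E'` iid
standard exponential and `G ~ Gamma(1/ξ, 1)` independent:
`P(V > x) = (1 + 2x)^{-1/ξ - 1} (1 + 2x(1 + 1/ξ))` for `x ≥ 0`. -/
theorem surv_V_half_w
    {Ω : Type*} [MeasurableSpace Ω] (μ : Measure Ω) [IsProbabilityMeasure μ]
    (E E' G : Ω → ℝ) (hEm : Measurable E) (hE'm : Measurable E') (hGm : Measurable G)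
    (ξ : ℝ) (hξ : 0 < ξ)
    (hE : μ.map E = expMeasure 1) (hE' : μ.map E' = expMeasure 1)
    (hG : μ.map G = gammaMeasure (1 / ξ) 1)
    (hind : iIndepFun (m := fun _ : Fin 3 => (inferInstance : MeasurableSpace ℝ)) ![E, E', G] μ) :
    ∀ x : ℝ, 0 ≤ x →
      (μ {ω | ((E ω + E' ω) / 2) / G ω > x}).toReal
        = (1 + 2 * x) ^ (-1 / ξ - 1) * (1 + 2 * x * (1 + 1 / ξ)) := by
  intro x hx
  have ha : 0 < 1 / ξ := by positivity
  have key : μ {ω | ((E ω + E' ω) / 2) / G ω > x}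
      = ∫⁻ g, (if 0 < g then ENNReal.ofReal (Real.exp (-(2*x*g)) * (1 + 2*x*g)) else 0)
          ∂(gammaMeasure (1/ξ) 1) := by
    have hmeas : ∀ i, Measurable (![E, E', G] i) := by
      intro i; fin_cases i <;> simpa using ‹_›
    have hEE' : IndepFun E E' μ := hind.indepFun (show (0 : Fin 3) ≠ 1 by decide)
    have hP : IndepFun (fun ω => (E ω, E' ω)) G μ := by
      have := hind.indepFun_prodMk hmeas 0 1 2 (by decide) (by decide)
      simpa using this
    have hmapEE' : μ.map (fun ω => (E ω, E' ω)) = (expMeasure 1).prod (expMeasure 1) := by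
      rw [(indepFun_iff_map_prod_eq_prod_map_map hEm.aemeasurable hE'm.aemeasurable).1 hEE',
        hE, hE']
    have hmapF : μ.map (fun ω => (G ω, (E ω, E' ω)))
        = (gammaMeasure (1/ξ) 1).prod ((expMeasure 1).prod (expMeasure 1)) := by
      rw [(indepFun_iff_map_prod_eq_prod_map_map hGm.aemeasurable
          (hEm.prodMk hE'm).aemeasurable).1 hP.symm, hG, hmapEE']
    set T : Set (ℝ × ℝ × ℝ) := {p | x < (p.2.1 + p.2.2) / 2 / p.1} with hT_def
    have hTm : MeasurableSet T :=
      measurableSet_lt measurable_const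
        (((measurable_snd.fst.add measurable_snd.snd).div_const 2).div measurable_fst)
    have hset : {ω | ((E ω + E' ω) / 2) / G ω > x}
        = (fun ω => (G ω, (E ω, E' ω))) ⁻¹' T := rfl
    rw [hset, ← Measure.map_apply (hGm.prodMk (hEm.prodMk hE'm)) hTm, hmapF,
      Measure.prod_apply hTm]
    refine lintegral_congr fun g => ?_
    rcases lt_trichotomy 0 g with hg | hg | hg
    · rw [if_pos hg]
      have hpre : Prod.mk g ⁻¹' T = {p : ℝ × ℝ | 2*x*g < p.1 + p.2} := by
        ext p
        simp only [hT_def, Set.mem_preimage, Set.mem_setOf_eq]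
        rw [lt_div_iff₀ hg, lt_div_iff₀ (show (0:ℝ) < 2 by norm_num)]
        constructor <;> intro h <;> nlinarith
      rw [hpre, exp2_surv' (by positivity)]
    · rw [if_neg (by simp [← hg])]
      have hpre : Prod.mk g ⁻¹' T = ∅ := by
        ext p
        simp only [hT_def, Set.mem_preimage, Set.mem_setOf_eq, Set.mem_empty_iff_false,
          iff_false, not_lt, ← hg, div_zero]
        exact hx
      rw [hpre, measure_empty]
    · rw [if_neg (not_lt.2 hg.le)]
      refine measure_mono_null ?_ exp2_neg'
      intro p hp
      have hp' : x < (p.1 + p.2) / 2 / g := hp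
      have h1 : 0 < (p.1 + p.2) / 2 / g := lt_of_le_of_lt hx hp'
      have h2 : (p.1 + p.2) / 2 < 0 := by
        by_contra h
        push_neg at h
        nlinarith [div_nonpos_of_nonneg_of_nonpos h hg.le]
      show p.1 + p.2 < 0
      linarith
  rw [key, gamma_int' ha hx, ENNReal.toReal_ofReal (by positivity)]
  rw [show -1 / ξ - 1 = -(1/ξ) - 1 by ring]
end

section
/- Let E, E₁, E₂ be iid standard exponentials, G ~ Gamma(α, 1) with α > 0 independent of them, and w ∈ (0,1) with w ∉ {1/2, 1/3}. Define V_j = (wE + (1−w)E_j)/G for j = 1,2. Then for x ≥ 0 and s ∈ {1, 2}: P(V₁ > x, …, V_s > x) = p_s(x) where p_s(x) = [sw/((s+1)w − 1)](1 + x/w)^{−α} − [(1−w)/((s+1)w − 1)](1 + sx/(1−w))^{−α}; in particular P(V₁ > x) = p₁(x) and P(V₁ > x, V₂ > x) = p₂(x). -/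
open MeasureTheory ProbabilityTheory Real

section JointSurvAuxSection
open Set
open scoped NNReal ENNReal

namespace JointSurvAux

lemma expMeasure_Iic {r : ℝ} (hr : 0 < r) (t : ℝ) :
    expMeasure r (Iic t) = ENNReal.ofReal (if 0 ≤ t then 1 - rexp (-(r*t)) else 0) := by
  rw [expMeasure, gammaMeasure, withDensity_apply _ measurableSet_Iic]
  exact lintegral_exponentialPDF_eq_antiDeriv hr t

lemma expMeasure_Ioi {r : ℝ} (hr : 0 < r) (t : ℝ) :
    expMeasure r (Ioi t) = ENNReal.ofReal (rexp (-(r * max t 0))) := by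
  haveI : IsProbabilityMeasure (expMeasure r) := isProbabilityMeasure_expMeasure hr
  rw [← compl_Iic, prob_compl_eq_one_sub measurableSet_Iic, expMeasure_Iic hr]
  rcases le_or_gt 0 t with h | h
  · rw [if_pos h, max_eq_left h, ← ENNReal.ofReal_one,
      ← ENNReal.ofReal_sub _ (by nlinarith [exp_le_one_iff.2 (by nlinarith : -(r*t) ≤ 0)])]
    norm_num
  · rw [if_neg (not_le.2 h), max_eq_right h.le]
    simp

lemma gammaMeasure_Iic_zero (α r : ℝ) : gammaMeasure α r (Iic 0) = 0 := by
  rw [gammaMeasure, withDensity_apply _ measurableSet_Iic,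
    setLIntegral_congr (Iio_ae_eq_Iic (a := (0:ℝ))).symm]
  exact lintegral_gammaPDF_of_nonpos le_rfl

lemma integral_exp_mul {k : ℝ} (hk : k ≠ 0) (d : ℝ) :
    ∫ e in (0:ℝ)..d, rexp (k * e) = (rexp (k*d) - 1)/k := by
  have hd : ∀ x : ℝ, HasDerivAt (fun y => rexp (k*y)/k) (rexp (k*x)) x := by
    intro x
    have h1 : HasDerivAt (fun y : ℝ => k*y) k x := by
      simpa using (hasDerivAt_id x).const_mul k
    have := (h1.exp).div_const k
    simpa [mul_comm, mul_div_assoc, mul_div_cancel_left₀ _ hk] using this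
  rw [intervalIntegral.integral_eq_sub_of_hasDerivAt (fun x _ => hd x)
    ((continuous_exp.comp (continuous_const.mul continuous_id)).intervalIntegrable 0 d)]
  simp [sub_div]

lemma Gint {α : ℝ} (hα : 0 < α) {k : ℝ} (hk : 0 ≤ k) :
    ∫ g in Ioi (0:ℝ), rexp (-(k*g)) ∂(gammaMeasure α 1) = (1+k) ^ (-α) := by
  rw [gammaMeasure, restrict_withDensity measurableSet_Ioi]
  have hpdf : gammaPDF α 1 = fun x => ((Real.toNNReal (gammaPDFReal α 1 x) : ℝ≥0) : ℝ≥0∞) := by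
    funext x; rfl
  rw [hpdf, integral_withDensity_eq_integral_smul
    ((measurable_gammaPDFReal α 1).real_toNNReal) _]
  have hcong : ∫ x in Ioi (0:ℝ), (Real.toNNReal (gammaPDFReal α 1 x)) • rexp (-(k*x))
      = ∫ x in Ioi (0:ℝ), (1/Gamma α) * (x ^ (α-1) * rexp (-((1+k)*x))) := by
    refine setIntegral_congr_fun measurableSet_Ioi (fun x hx => ?_)
    have hx0 : (0:ℝ) < x := hx
    have hnn : 0 ≤ gammaPDFReal α 1 x := gammaPDFReal_nonneg hα one_pos x
    rw [NNReal.smul_def, Real.coe_toNNReal _ hnn]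
    simp only [gammaPDFReal, if_pos hx0.le, one_rpow]
    rw [show rexp (-((1+k)*x)) = rexp (-(1*x)) * rexp (-(k*x)) by
      rw [← Real.exp_add]; ring_nf]
    rw [smul_eq_mul]; ring
  rw [hcong, integral_const_mul, integral_rpow_mul_exp_neg_mul_Ioi hα (by linarith)]
  have h1 : ((1:ℝ)/(1+k))^α = (1+k)^(-α) := by
    rw [one_div, Real.inv_rpow (by linarith : (0:ℝ) ≤ 1+k),
      ← Real.rpow_neg (by linarith : (0:ℝ) ≤ 1+k)]
  rw [h1]
  field_simp [Real.Gamma_pos_of_pos hα |>.ne']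

lemma Eint {u v r c : ℝ} (hu : 0 < u) (hv : 0 < v) (hr : 0 < r) (hne : r*u ≠ v) (hc : 0 ≤ c) :
    ((expMeasure 1).prod (expMeasure r)) {p : ℝ×ℝ | c < u * p.1 + v * p.2}
      = ENNReal.ofReal ((r*u*rexp (-(c/u)) - v*rexp (-(r*c/v)))/(r*u - v)) := by
  haveI := isProbabilityMeasure_expMeasure hr
  haveI := isProbabilityMeasure_expMeasure (zero_lt_one (α := ℝ))
  have hBmeas : MeasurableSet {p : ℝ×ℝ | c < u * p.1 + v * p.2} :=
    measurableSet_lt measurable_const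
      ((measurable_fst.const_mul u).add (measurable_snd.const_mul v))
  rw [Measure.prod_apply hBmeas]
  have hslice : ∀ e : ℝ, (Prod.mk e ⁻¹' {p : ℝ×ℝ | c < u * p.1 + v * p.2})
      = Ioi ((c - u*e)/v) := by
    intro e; ext m; simp only [mem_preimage, mem_setOf_eq, mem_Ioi]
    rw [div_lt_iff₀ hv]; constructor <;> intro h <;> nlinarith
  simp_rw [hslice, expMeasure_Ioi hr]
  set f : ℝ → ℝ := fun e => rexp (-(r * max ((c - u*e)/v) 0)) with hfdef
  have hfc : Continuous f := by
    apply continuous_exp.comp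
    exact (continuous_const.mul (((continuous_const.sub
      (continuous_const.mul continuous_id)).div_const v).max continuous_const)).neg
  have hf0 : ∀ e, 0 ≤ f e := fun e => (exp_pos _).le
  have hfi : Integrable f (expMeasure 1) := by
    refine Integrable.mono' (integrable_const 1) hfc.aestronglyMeasurable
      (ae_of_all _ fun e => ?_)
    rw [norm_of_nonneg (hf0 e)]
    exact exp_le_one_iff.2 (neg_nonpos.2 (mul_nonneg hr.le (le_max_right _ _)))
  rw [← ofReal_integral_eq_lintegral_ofReal hfi (ae_of_all _ hf0)]
  congr 1
  -- compute the real integral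
  have hpdf : gammaPDF 1 1 = fun x => ((Real.toNNReal (gammaPDFReal 1 1 x) : ℝ≥0) : ℝ≥0∞) := by
    funext x; rfl
  rw [expMeasure, gammaMeasure, hpdf,
    integral_withDensity_eq_integral_smul ((measurable_gammaPDFReal 1 1).real_toNNReal) f]
  have hvanish : ∀ x ∉ Ici (0:ℝ), (Real.toNNReal (gammaPDFReal 1 1 x)) • f x = 0 := by
    intro x hx
    simp only [mem_Ici, not_le] at hx
    simp [gammaPDFReal, not_le.2 hx]
  rw [← setIntegral_eq_integral_of_forall_compl_eq_zero hvanish, integral_Ici_eq_integral_Ioi]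
  have hcong : ∫ x in Ioi (0:ℝ), (Real.toNNReal (gammaPDFReal 1 1 x)) • f x
      = ∫ x in Ioi (0:ℝ), rexp (-x) * f x := by
    refine setIntegral_congr_fun measurableSet_Ioi (fun x hx => ?_)
    have hx0 : (0:ℝ) < x := hx
    have hnn : 0 ≤ gammaPDFReal 1 1 x := gammaPDFReal_nonneg zero_lt_one one_pos x
    rw [NNReal.smul_def, Real.coe_toNNReal _ hnn]
    simp [gammaPDFReal, hx0.le, Real.rpow_zero, Real.Gamma_one]
  rw [hcong]
  set d := c/u with hd
  have hd0 : 0 ≤ d := div_nonneg hc hu.le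
  set k := (r*u - v)/v with hk
  have hkne : k ≠ 0 := div_ne_zero (sub_ne_zero.2 hne) hv.ne'
  -- split
  have h2 : ∀ x ∈ Ioi d, rexp (-x) * f x = rexp (-x) := by
    intro x hx
    have : (c - u*x)/v < 0 := by
      apply div_neg_of_neg_of_pos _ hv
      have : d < x := hx
      nlinarith [(div_lt_iff₀ hu).1 this]
    simp [hfdef, max_eq_right this.le]
  have h1 : ∀ x ∈ Ioc 0 d, rexp (-x) * f x = rexp (-(r*c/v)) * rexp (k * x) := by
    intro x hx
    have hxd : x ≤ d := hx.2
    have : 0 ≤ (c - u*x)/v := by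
      apply div_nonneg _ hv.le
      nlinarith [(le_div_iff₀ hu).1 hxd]
    simp only [hfdef, max_eq_left this]
    rw [← exp_add, ← exp_add]
    congr 1
    rw [hk]
    linear_combination x * mul_inv_cancel₀ hv.ne'
  have hi2 : IntegrableOn (fun x => rexp (-x) * f x) (Ioi d) := by
    refine IntegrableOn.congr_fun ?_ (fun x hx => (h2 x hx).symm) measurableSet_Ioi
    exact (exp_neg_integrableOn_Ioi d one_pos).congr_fun (fun x _ => by norm_num) measurableSet_Ioi
  have hi1 : IntegrableOn (fun x => rexp (-x) * f x) (Ioc 0 d) :=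
    ((continuous_exp.comp continuous_neg).mul hfc).integrableOn_Ioc
  rw [← Ioc_union_Ioi_eq_Ioi hd0, setIntegral_union (Ioc_disjoint_Ioi le_rfl)
    measurableSet_Ioi hi1 hi2,
    setIntegral_congr_fun measurableSet_Ioc h1,
    setIntegral_congr_fun measurableSet_Ioi h2,
    integral_exp_neg_Ioi, integral_const_mul,
    ← intervalIntegral.integral_of_le hd0, integral_exp_mul hkne]
  -- final algebra
  have hkey : rexp (-(r*c/v)) * rexp (k * d) = rexp (-d) := by
    rw [← exp_add]
    congr 1
    rw [hk, hd]
    linear_combination (r*c*v⁻¹) * mul_inv_cancel₀ hu.ne' - (c*u⁻¹) * mul_inv_cancel₀ hv.ne'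
  have hkv : k * v = r*u - v := div_mul_cancel₀ _ hv.ne'
  have hD : r*u - v ≠ 0 := sub_ne_zero.2 hne
  set A := rexp (-d) with hA
  set B := rexp (-(r*c/v)) with hB
  set X := rexp (k*d) with hX
  rw [← mul_div_assoc, div_add' _ _ _ hkne, div_eq_div_iff hkne hD]
  linear_combination (r*u - v) * hkey - (A - B) * hkv

lemma S_nonneg {u v r c : ℝ} (hu : 0 < u) (hv : 0 < v) (hr : 0 < r) (hne : r*u ≠ v)
    (hc : 0 ≤ c) : 0 ≤ (r*u*rexp (-(c/u)) - v*rexp (-(r*c/v)))/(r*u - v) := by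
  rcases lt_or_gt_of_ne hne with h | h
  · apply div_nonneg_of_nonpos (by nlinarith [exp_pos (-(r*c/v)), exp_pos (-(c/u)), exp_le_exp.2 (show -(c/u) ≤ -(r*c/v) by rw [neg_le_neg_iff, div_le_div_iff₀ hv hu]; nlinarith)]) (by linarith)
  · apply div_nonneg _ (by linarith)
    have h1 : rexp (-(r*c/v)) ≤ rexp (-(c/u)) := by
      apply exp_le_exp.2
      rw [neg_le_neg_iff, div_le_div_iff₀ hu hv]
      nlinarith
    nlinarith [exp_pos (-(r*c/v)), exp_pos (-(c/u))]

lemma key {Ω : Type*} [MeasurableSpace Ω] (μ : Measure Ω) [IsProbabilityMeasure μ]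
    (E Y G : Ω → ℝ) (hEm : Measurable E) (hYm : Measurable Y) (hGm : Measurable G)
    (α : ℝ) (hα : 0 < α) (w r : ℝ) (hw : 0 < w) (hw1 : w < 1) (hr : 0 < r)
    (hne : r*w ≠ 1-w)
    (hE : μ.map E = expMeasure 1) (hY : μ.map Y = expMeasure r)
    (hG : μ.map G = gammaMeasure α 1)
    (hEY : IndepFun E Y μ)
    (hGT : IndepFun G (fun ω => w * E ω + (1-w) * Y ω) μ)
    (x : ℝ) (hx : 0 ≤ x) :
    (μ {ω | 0 < G ω ∧ x * G ω < w * E ω + (1-w) * Y ω}).toReal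
      = r*w/(r*w - (1-w)) * (1+x/w)^(-α) - (1-w)/(r*w-(1-w)) * (1+r*x/(1-w))^(-α) := by
  have hvpos : (0:ℝ) < 1 - w := by linarith
  set T : Ω → ℝ := fun ω => w * E ω + (1-w) * Y ω with hT
  have hTm : Measurable T := (hEm.const_mul w).add (hYm.const_mul (1-w))
  haveI hγP : IsProbabilityMeasure (gammaMeasure α 1) := isProbabilityMeasure_gammaMeasure hα one_pos
  haveI hτP : IsProbabilityMeasure (μ.map T) := Measure.isProbabilityMeasure_map hTm.aemeasurable
  have hmapEY : μ.map (fun ω => (E ω, Y ω)) = (expMeasure 1).prod (expMeasure r) := by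
    rw [(indepFun_iff_map_prod_eq_prod_map_map hEm.aemeasurable hYm.aemeasurable).mp hEY,
      hE, hY]
  have htail : ∀ c : ℝ, 0 ≤ c → (μ.map T) (Ioi c)
      = ENNReal.ofReal ((r*w*rexp (-(c/w)) - (1-w)*rexp (-(r*c/(1-w))))/(r*w - (1-w))) := by
    intro c hc
    have hBmeas : MeasurableSet {p : ℝ×ℝ | c < w * p.1 + (1-w) * p.2} :=
      measurableSet_lt measurable_const
        ((measurable_fst.const_mul w).add (measurable_snd.const_mul (1-w)))
    rw [Measure.map_apply hTm measurableSet_Ioi]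
    have hpre : T ⁻¹' Ioi c
        = (fun ω => (E ω, Y ω)) ⁻¹' {p : ℝ×ℝ | c < w * p.1 + (1-w) * p.2} := rfl
    rw [hpre, ← Measure.map_apply (hEm.prodMk hYm) hBmeas, hmapEY]
    exact Eint hw hvpos hr hne hc
  have hAmeas : MeasurableSet {p : ℝ×ℝ | 0 < p.1 ∧ x * p.1 < p.2} :=
    (measurableSet_lt measurable_const measurable_fst).inter
      (measurableSet_lt (measurable_fst.const_mul x) measurable_snd)
  have hmapGT : μ.map (fun ω => (G ω, T ω)) = (gammaMeasure α 1).prod (μ.map T) := by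
    rw [(indepFun_iff_map_prod_eq_prod_map_map hGm.aemeasurable hTm.aemeasurable).mp hGT, hG]
  have hev : {ω | 0 < G ω ∧ x * G ω < T ω}
      = (fun ω => (G ω, T ω)) ⁻¹' {p : ℝ×ℝ | 0 < p.1 ∧ x * p.1 < p.2} := rfl
  rw [hev, ← Measure.map_apply (hGm.prodMk hTm) hAmeas, hmapGT, Measure.prod_apply hAmeas]
  have hslice : ∀ g : ℝ, (μ.map T) (Prod.mk g ⁻¹' {p : ℝ×ℝ | 0 < p.1 ∧ x * p.1 < p.2})
      = (Ioi (0:ℝ)).indicator (fun g => (μ.map T) (Ioi (x*g))) g := by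
    intro g
    by_cases hg : 0 < g
    · rw [indicator_of_mem (show g ∈ Ioi (0:ℝ) from hg)]
      congr 1
      ext t; simp [hg]
    · rw [indicator_of_notMem (show g ∉ Ioi (0:ℝ) from hg)]
      have h0 : (Prod.mk g ⁻¹' {p : ℝ×ℝ | 0 < p.1 ∧ x * p.1 < p.2}) = ∅ := by
        ext t; simp [hg]
      simp [h0]
  rw [lintegral_congr hslice, lintegral_indicator measurableSet_Ioi _,
    setLIntegral_congr_fun_ae measurableSet_Ioi
      (ae_of_all _ fun g (hg : g ∈ Ioi 0) => htail _ (mul_nonneg hx (le_of_lt hg)))]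
  have hcont : Measurable fun g : ℝ => ENNReal.ofReal
      ((r*w*rexp (-((x*g)/w)) - (1-w)*rexp (-(r*(x*g)/(1-w))))/(r*w - (1-w))) := by
    apply Measurable.ennreal_ofReal
    fun_prop
  rw [← integral_toReal hcont.aemeasurable (ae_of_all _ fun g => ENNReal.ofReal_lt_top)]
  have hSnn : ∀ g ∈ Ioi (0:ℝ),
      0 ≤ (r*w*rexp (-((x*g)/w)) - (1-w)*rexp (-(r*(x*g)/(1-w))))/(r*w - (1-w)) :=
    fun g hg => S_nonneg hw hvpos hr hne (mul_nonneg hx (le_of_lt hg))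
  have hptw : EqOn (fun g : ℝ => (ENNReal.ofReal
        ((r*w*rexp (-((x*g)/w)) - (1-w)*rexp (-(r*(x*g)/(1-w))))/(r*w - (1-w)))).toReal)
      (fun g : ℝ => (r*w/(r*w-(1-w))) * rexp (-((x/w)*g))
        - ((1-w)/(r*w-(1-w))) * rexp (-((r*x/(1-w))*g))) (Ioi 0) := by
    intro g hg
    simp only
    rw [ENNReal.toReal_ofReal (hSnn g hg),
      show rexp (-((x*g)/w)) = rexp (-((x/w)*g)) by ring_nf,
      show rexp (-(r*(x*g)/(1-w))) = rexp (-((r*x/(1-w))*g)) by ring_nf]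
    ring
  rw [setIntegral_congr_fun measurableSet_Ioi hptw]
  have hint : ∀ k : ℝ, 0 ≤ k →
      Integrable (fun g => rexp (-(k*g))) ((gammaMeasure α 1).restrict (Ioi 0)) := by
    intro k hk
    refine Integrable.mono' (integrable_const 1)
      (Continuous.aestronglyMeasurable (by fun_prop)) ?_
    refine (ae_restrict_iff' measurableSet_Ioi).2 (ae_of_all _ fun g hg => ?_)
    rw [norm_of_nonneg (exp_pos _).le]
    exact exp_le_one_iff.2 (neg_nonpos.2 (mul_nonneg hk (le_of_lt hg)))
  have hk1 : (0:ℝ) ≤ x/w := div_nonneg hx hw.le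
  have hk2 : (0:ℝ) ≤ r*x/(1-w) := div_nonneg (mul_nonneg hr.le hx) hvpos.le
  rw [integral_sub ((hint _ hk1).const_mul _) ((hint _ hk2).const_mul _),
    integral_const_mul, integral_const_mul, Gint hα hk1, Gint hα hk2]

end JointSurvAux
end JointSurvAuxSection

open JointSurvAux Set in
/-- Marginal and joint survival functions of `V_j = (wE + (1-w)E_j)/G`, `j = 1,2`, where
`E, E₁, E₂` are iid standard exponential and `G ~ Gamma(α,1)` independent,
`w ∈ (0,1) \\ {1/2, 1/3}`: for `x ≥ 0` and `s ∈ {1,2}`,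
`P(V₁ > x, …, V_s > x) = p_s(x)` with
`p_s(x) = [sw/((s+1)w-1)](1+x/w)^{-α} - [(1-w)/((s+1)w-1)](1+sx/(1-w))^{-α}`. -/
theorem joint_surv_V1_V2
    {Ω : Type*} [MeasurableSpace Ω] (μ : Measure Ω) [IsProbabilityMeasure μ]
    (E E₁ E₂ G : Ω → ℝ) (hEm : Measurable E) (hE₁m : Measurable E₁)
    (hE₂m : Measurable E₂) (hGm : Measurable G)
    (α : ℝ) (hα : 0 < α) (w : ℝ) (hw : w ∈ Set.Ioo (0 : ℝ) 1)
    (hw2 : w ≠ 1 / 2) (hw3 : w ≠ 1 / 3)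
    (hE : μ.map E = expMeasure 1) (hE₁ : μ.map E₁ = expMeasure 1)
    (hE₂ : μ.map E₂ = expMeasure 1) (hG : μ.map G = gammaMeasure α 1)
    (hind : iIndepFun (m := fun _ : Fin 4 => (inferInstance : MeasurableSpace ℝ))
      ![E, E₁, E₂, G] μ) :
    ∀ x : ℝ, 0 ≤ x →
      (let p : ℝ → ℝ → ℝ := fun s x =>
        s * w / ((s + 1) * w - 1) * (1 + x / w) ^ (-α)
          - (1 - w) / ((s + 1) * w - 1) * (1 + s * x / (1 - w)) ^ (-α)
      (μ {ω | (w * E ω + (1 - w) * E₁ ω) / G ω > x}).toReal = p 1 x ∧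
      (μ {ω | (w * E ω + (1 - w) * E₁ ω) / G ω > x ∧
              (w * E ω + (1 - w) * E₂ ω) / G ω > x}).toReal = p 2 x) := by
  intro x hx
  dsimp only
  obtain ⟨hw0, hw1⟩ := hw
  have hmeasvec : ∀ i, Measurable (![E, E₁, E₂, G] i) := by
    intro i; fin_cases i <;> assumption
  have hminm : Measurable fun ω => min (E₁ ω) (E₂ ω) := hE₁m.min hE₂m
  -- independence facts
  have h12 : IndepFun E₁ E₂ μ := hind.indepFun (show (1 : Fin 4) ≠ 2 by decide)
  have hEY₁ : IndepFun E E₁ μ := hind.indepFun (show (0 : Fin 4) ≠ 1 by decide)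
  have hEmin : IndepFun E (fun ω => min (E₁ ω) (E₂ ω)) μ := by
    have h := hind.indepFun_finset {0} {1, 2} (by decide) hmeasvec
    exact h.comp (φ := fun v : (({0} : Finset (Fin 4)) → ℝ) => v ⟨0, by decide⟩)
      (ψ := fun v : (({1, 2} : Finset (Fin 4)) → ℝ) =>
        min (v ⟨1, by decide⟩) (v ⟨2, by decide⟩))
      (measurable_pi_apply _) ((measurable_pi_apply (⟨1, by decide⟩ : ({1, 2} : Finset (Fin 4)))).min (measurable_pi_apply (⟨2, by decide⟩ : ({1, 2} : Finset (Fin 4)))))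
  have hGT₁ : IndepFun G (fun ω => w * E ω + (1-w) * E₁ ω) μ := by
    have h := hind.indepFun_finset {3} {0, 1} (by decide) hmeasvec
    exact h.comp (φ := fun v : (({3} : Finset (Fin 4)) → ℝ) => v ⟨3, by decide⟩)
      (ψ := fun v : (({0, 1} : Finset (Fin 4)) → ℝ) =>
        w * v ⟨0, by decide⟩ + (1-w) * v ⟨1, by decide⟩)
      (measurable_pi_apply _)
      (by fun_prop)
  have hGT₂ : IndepFun G (fun ω => w * E ω + (1-w) * min (E₁ ω) (E₂ ω)) μ := by
    have h := hind.indepFun_finset {3} {0, 1, 2} (by decide) hmeasvec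
    exact h.comp (φ := fun v : (({3} : Finset (Fin 4)) → ℝ) => v ⟨3, by decide⟩)
      (ψ := fun v : (({0, 1, 2} : Finset (Fin 4)) → ℝ) =>
        w * v ⟨0, by decide⟩ + (1-w) * min (v ⟨1, by decide⟩) (v ⟨2, by decide⟩))
      (measurable_pi_apply _)
      (by fun_prop)
  -- law of the min
  have hminlaw : μ.map (fun ω => min (E₁ ω) (E₂ ω)) = expMeasure 2 := by
    haveI : IsProbabilityMeasure (μ.map (fun ω => min (E₁ ω) (E₂ ω))) :=
      Measure.isProbabilityMeasure_map hminm.aemeasurable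
    haveI : IsProbabilityMeasure (expMeasure 2) := isProbabilityMeasure_expMeasure two_pos
    refine Measure.ext_of_Iic _ _ (fun t => ?_)
    rw [show Iic t = (Ioi t)ᶜ from compl_Ioi.symm,
      prob_compl_eq_one_sub measurableSet_Ioi, prob_compl_eq_one_sub measurableSet_Ioi]
    congr 1
    rw [Measure.map_apply hminm measurableSet_Ioi]
    have hpre : (fun ω => min (E₁ ω) (E₂ ω)) ⁻¹' Ioi t
        = (E₁ ⁻¹' Ioi t) ∩ (E₂ ⁻¹' Ioi t) := by
      ext ω; simp [lt_min_iff]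
    rw [hpre, h12.measure_inter_preimage_eq_mul _ _ measurableSet_Ioi measurableSet_Ioi,
      ← Measure.map_apply hE₁m measurableSet_Ioi, ← Measure.map_apply hE₂m measurableSet_Ioi,
      hE₁, hE₂, expMeasure_Ioi one_pos, expMeasure_Ioi two_pos,
      ← ENNReal.ofReal_mul (exp_pos _).le, ← exp_add]
    congr 2
    ring
  -- G is a.e. positive
  have hGpos : ∀ᵐ ω ∂μ, 0 < G ω := by
    rw [ae_iff]
    have hset : {ω | ¬ 0 < G ω} = G ⁻¹' Iic 0 := by ext ω; simp
    rw [hset, ← Measure.map_apply hGm measurableSet_Iic, hG]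
    exact gammaMeasure_Iic_zero α 1
  constructor
  · have hset1 : μ {ω | (w * E ω + (1 - w) * E₁ ω) / G ω > x}
        = μ {ω | 0 < G ω ∧ x * G ω < w * E ω + (1-w) * E₁ ω} := by
      apply measure_congr
      filter_upwards [hGpos] with ω hg
      simp only [eq_iff_iff]
      show (x < (w * E ω + (1 - w) * E₁ ω) / G ω)
          ↔ (0 < G ω ∧ x * G ω < w * E ω + (1-w) * E₁ ω)
      rw [lt_div_iff₀ hg]
      exact ⟨fun h => ⟨hg, h⟩, fun h => h.2⟩
    rw [hset1, key μ E E₁ G hEm hE₁m hGm α hα w 1 hw0 hw1 one_pos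
      (by intro hcon; apply hw2; linarith) hE hE₁ hG hEY₁ hGT₁ x hx]
    ring
  · have hset2 : μ {ω | (w * E ω + (1 - w) * E₁ ω) / G ω > x ∧
          (w * E ω + (1 - w) * E₂ ω) / G ω > x}
        = μ {ω | 0 < G ω ∧ x * G ω < w * E ω + (1-w) * min (E₁ ω) (E₂ ω)} := by
      apply measure_congr
      filter_upwards [hGpos] with ω hg
      simp only [eq_iff_iff]
      show (x < (w * E ω + (1 - w) * E₁ ω) / G ω ∧ x < (w * E ω + (1 - w) * E₂ ω) / G ω)
          ↔ (0 < G ω ∧ x * G ω < w * E ω + (1-w) * min (E₁ ω) (E₂ ω))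
      rw [lt_div_iff₀ hg, lt_div_iff₀ hg]
      constructor
      · rintro ⟨h1, h2⟩
        refine ⟨hg, ?_⟩
        rcases le_total (E₁ ω) (E₂ ω) with h | h
        · rwa [min_eq_left h]
        · rwa [min_eq_right h]
      · rintro ⟨-, h⟩
        constructor
        · exact lt_of_lt_of_le h (by nlinarith [min_le_left (E₁ ω) (E₂ ω)])
        · exact lt_of_lt_of_le h (by nlinarith [min_le_right (E₁ ω) (E₂ ω)])
    rw [hset2, key μ E (fun ω => min (E₁ ω) (E₂ ω)) G hEm hminm hGm α hα w 2 hw0 hw1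
      two_pos (by intro hcon; apply hw3; linarith) hE hminlaw hG hEmin hGT₂ x hx]
    ring
end

section
/- With p_s(x) = [sw/((s+1)w − 1)](1 + x/w)^{−α} − [(1−w)/((s+1)w − 1)](1 + sx/(1−w))^{−α} for s = 1,2, α > 0 and w ∈ (0,1)\{1/2, 1/3}, the limit lim_{x→∞} p₂(x)/p₁(x) exists and equals χ(w, α) = [(2w−1)/(3w−1)] · [2w^{α+1} − 2^{−α}(1−w)^{α+1}] / [w^{α+1} − (1−w)^{α+1}]. -/
open Real Filter Topology

private lemma aux_tendsto (α c : ℝ) (hc : 0 < c) :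
    Tendsto (fun x : ℝ => x ^ α * (1 + x / c) ^ (-α)) atTop (𝓝 (c ^ α)) := by
  have h0 : Tendsto (fun x : ℝ => (x⁻¹ + c⁻¹)⁻¹) atTop (𝓝 c) := by
    have h1 : Tendsto (fun x : ℝ => x⁻¹ + c⁻¹) atTop (𝓝 (0 + c⁻¹)) :=
      tendsto_inv_atTop_zero.add_const c⁻¹
    rw [zero_add] at h1
    simpa using h1.inv₀ (by positivity)
  have h2 : Tendsto (fun x : ℝ => ((x⁻¹ + c⁻¹)⁻¹) ^ α) atTop (𝓝 (c ^ α)) :=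
    h0.rpow_const (Or.inl hc.ne')
  refine h2.congr' ?_
  filter_upwards [eventually_gt_atTop 0] with x hx
  have hx1 : (0:ℝ) < 1 + x / c := by positivity
  have heq : (x⁻¹ + c⁻¹)⁻¹ = x / (1 + x / c) := by
    field_simp
  rw [heq, Real.div_rpow hx.le hx1.le, Real.rpow_neg hx1.le, div_eq_mul_inv]

/-- With `p_s(x) = [sw/((s+1)w-1)](1+x/w)^{-α} - [(1-w)/((s+1)w-1)](1+sx/(1-w))^{-α}`
for `s = 1, 2`, `α > 0`, `w ∈ (0,1) \ {1/2, 1/3}`, the limit `p₂(x)/p₁(x)` as `x → ∞`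
exists and equals `[(2w-1)/(3w-1)]·[2w^{α+1} - 2^{-α}(1-w)^{α+1}]/[w^{α+1} - (1-w)^{α+1}]`. -/
theorem chi_limit
    (α w : ℝ) (hα : 0 < α) (hw : w ∈ Set.Ioo (0 : ℝ) 1)
    (hw2 : w ≠ 1 / 2) (hw3 : w ≠ 1 / 3) :
    let p : ℝ → ℝ → ℝ := fun s x =>
      s * w / ((s + 1) * w - 1) * (1 + x / w) ^ (-α)
        - (1 - w) / ((s + 1) * w - 1) * (1 + s * x / (1 - w)) ^ (-α)
    Tendsto (fun x : ℝ => p 2 x / p 1 x) atTop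
      (𝓝 ((2 * w - 1) / (3 * w - 1) *
        ((2 * w ^ (α + 1) - 2 ^ (-α) * (1 - w) ^ (α + 1))
          / (w ^ (α + 1) - (1 - w) ^ (α + 1))))) := by
  intro p
  obtain ⟨hw0, hw1⟩ := hw
  have h1w : (0:ℝ) < 1 - w := by linarith
  have h2w : 2 * w - 1 ≠ 0 := by intro h; apply hw2; linarith
  have h3w : 3 * w - 1 ≠ 0 := by intro h; apply hw3; linarith
  have hne : w ^ (α + 1) ≠ (1 - w) ^ (α + 1) := by
    have hαp : (0:ℝ) < α + 1 := by linarith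
    rcases lt_trichotomy w (1 - w) with h | h | h
    · exact (Real.rpow_lt_rpow hw0.le h hαp).ne
    · exact absurd (by linarith : w = 1/2) hw2
    · exact (Real.rpow_lt_rpow h1w.le h hαp).ne'
  have hsub : w ^ (α + 1) - (1 - w) ^ (α + 1) ≠ 0 := sub_ne_zero.mpr hne
  set L1 : ℝ := w / (2 * w - 1) * w ^ α - (1 - w) / (2 * w - 1) * (1 - w) ^ α with hL1def
  set L2 : ℝ := 2 * w / (3 * w - 1) * w ^ α - (1 - w) / (3 * w - 1) * ((1 - w) / 2) ^ α
    with hL2def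
  have hwpow : w ^ (α + 1) = w ^ α * w := by
    rw [Real.rpow_add hw0, Real.rpow_one]
  have h1wpow : (1 - w) ^ (α + 1) = (1 - w) ^ α * (1 - w) := by
    rw [Real.rpow_add h1w, Real.rpow_one]
  have hhalf : ((1 - w) / 2) ^ α = (1 - w) ^ α * 2 ^ (-α) := by
    rw [Real.div_rpow h1w.le (by norm_num : (0:ℝ) ≤ 2), Real.rpow_neg (by norm_num : (0:ℝ) ≤ 2),
      div_eq_mul_inv]
  have hL1ne : L1 ≠ 0 := by
    have : L1 = (w ^ (α + 1) - (1 - w) ^ (α + 1)) / (2 * w - 1) := by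
      rw [hL1def, hwpow, h1wpow]; field_simp
    rw [this]
    exact div_ne_zero hsub h2w
  have T1 : Tendsto (fun x : ℝ => p 1 x * x ^ α) atTop (𝓝 L1) := by
    have := ((aux_tendsto α w hw0).const_mul (w / (2 * w - 1))).sub
      ((aux_tendsto α (1 - w) h1w).const_mul ((1 - w) / (2 * w - 1)))
    refine this.congr fun x => ?_
    simp only [p]
    norm_num
    ring
  have T2 : Tendsto (fun x : ℝ => p 2 x * x ^ α) atTop (𝓝 L2) := by
    have haux := (aux_tendsto α ((1 - w) / 2) (by positivity))
    have hrw : ∀ x : ℝ, 1 + x / ((1 - w) / 2) = 1 + 2 * x / (1 - w) := by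
      intro x; rw [div_div_eq_mul_div]; ring
    simp only [hrw] at haux
    have := ((aux_tendsto α w hw0).const_mul (2 * w / (3 * w - 1))).sub
      (haux.const_mul ((1 - w) / (3 * w - 1)))
    refine this.congr fun x => ?_
    simp only [p]
    norm_num
    ring
  have key : Tendsto (fun x : ℝ => p 2 x / p 1 x) atTop (𝓝 (L2 / L1)) := by
    have := T2.div T1 hL1ne
    refine Tendsto.congr' ?_ this
    filter_upwards [eventually_gt_atTop (0:ℝ)] with x hx
    have hxα : x ^ α ≠ 0 := (Real.rpow_pos_of_pos hx α).ne'
    simp only [Pi.div_apply]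
    rw [mul_div_mul_right _ _ hxα]
  have hL1 : L1 = (w ^ α * w - (1 - w) ^ α * (1 - w)) / (2 * w - 1) := by
    rw [hL1def]; field_simp
  have hL2 : L2 = (2 * (w ^ α * w) - 2 ^ (-α) * ((1 - w) ^ α * (1 - w))) / (3 * w - 1) := by
    rw [hL2def, hhalf]; field_simp
  rw [hwpow, h1wpow] at hsub
  convert key using 2
  rw [hL1, hL2, hwpow, h1wpow]
  field_simp [h2w, h3w, hsub]
end
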